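/- Define substitutions on binary words by $L(0)=0$, $L(1)=10$, $M(0)=01$, $M(1)=10$, $R(0)=01$, $R(1)=1$. Then for every $\sigma$ in the monoid generated by $\{L, R\}$ composed with $M$ on the right (i.e., $\sigma = \tau M$ with $\tau \in \{L,R\}^*$), there exists a finite binary word $w$ such that $\sigma(0) = 01w$ and $\sigma(1) = 10w$. -/

import Mathlib

def Lsub : Bool → List Bool := fun b => cond b [true, false] [false]

def Msub : Bool → List Bool := fun b => cond b [true, false] [false, true]

def Rsub : Bool → List Bool := fun b => cond b [true] [false, true]

/-- Composition of substitutions: `(compSub σ τ) b` is the word `σ(τ(b))`. -/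
def compSub (σ τ : Bool → List Bool) : Bool → List Bool := fun b => (τ b).flatMap σ

/-- Every substitution of the form `τ M` with `τ ∈ {L,R}^*` maps `0` to `01w`
and `1` to `10w` for a common word `w`. -/
theorem stmt18 (gs : List (Bool → List Bool)) (hg : ∀ g ∈ gs, g = Lsub ∨ g = Rsub) :
    ∃ w : List Bool,
      (gs.foldr compSub Msub) false = [false, true] ++ w ∧
      (gs.foldr compSub Msub) true = [true, false] ++ w := by
  induction gs with
  | nil => exact ⟨[], rfl, rfl⟩
  | cons g rest ih =>
    obtain ⟨w, h0, h1⟩ := ih (fun g hg' => hg g (List.mem_cons_of_mem _ hg'))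
    rcases hg g List.mem_cons_self with rfl | rfl
    · refine ⟨false :: w.flatMap Lsub, ?_, ?_⟩ <;>
        simp [List.foldr_cons, compSub, h0, h1, Lsub]
    · refine ⟨true :: w.flatMap Rsub, ?_, ?_⟩ <;>
        simp [List.foldr_cons, compSub, h0, h1, Rsub]
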